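/- Let a ∈ ℂⁿ with n ≥ 2. If max_k |a_k| ≤ (1/2) Σ_{k=1}^n |a_k|, then there exist angles θ₁,…,θₙ ∈ [0, 2π) such that Σ_{k=1}^n e^{iθ_k} a_k = 0. -/

import Mathlib

open Complex Finset

/-- Any unit complex number is `exp (θ i)` for some `θ ∈ [0, 2π)`. -/
lemma unit_angle (w : ℂ) (hw : ‖w‖ = 1) :
    ∃ θ : ℝ, θ ∈ Set.Ico 0 (2 * Real.pi) ∧ Complex.exp ((θ : ℂ) * Complex.I) = w := by
  have hpi := Real.pi_pos
  have harg1 := Complex.arg_le_pi w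
  have harg2 := Complex.neg_pi_lt_arg w
  have habs : ‖w‖ = 1 := hw
  have hexp : Complex.exp ((w.arg : ℂ) * Complex.I) = w := by
    have := Complex.norm_mul_exp_arg_mul_I w
    rwa [habs, Complex.ofReal_one, one_mul] at this
  by_cases hle : 0 ≤ w.arg
  · exact ⟨w.arg, ⟨hle, by linarith⟩, hexp⟩
  · refine ⟨w.arg + 2 * Real.pi, ⟨by linarith, by linarith⟩, ?_⟩
    push_cast
    rw [add_mul, Complex.exp_add, hexp, Complex.exp_two_pi_mul_I, mul_one]

/-- Rotate `a` onto the ray of the unit vector `u`. -/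
lemma rotate_to (u : ℂ) (hu : ‖u‖ = 1) (a : ℂ) :
    ∃ θ : ℝ, θ ∈ Set.Ico 0 (2 * Real.pi) ∧
      Complex.exp ((θ : ℂ) * Complex.I) * a = u * (‖a‖ : ℂ) := by
  by_cases ha : a = 0
  · exact ⟨0, ⟨le_refl 0, by positivity⟩, by simp [ha]⟩
  · have hna : (‖a‖ : ℝ) ≠ 0 := norm_ne_zero_iff.mpr ha
    set w := u * (‖a‖ : ℂ) / a with hw
    have hwn : ‖w‖ = 1 := by
      rw [hw, norm_div, norm_mul, hu, Complex.norm_real, Real.norm_eq_abs, abs_norm,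
        one_mul, div_self hna]
    obtain ⟨θ, hθ, hθw⟩ := unit_angle w hwn
    exact ⟨θ, hθ, by rw [hθw, hw, div_mul_cancel₀ _ ha]⟩

/-- Triangle construction: three unit vectors closing a triangle with given side lengths. -/
lemma triangle_units (s1 s2 s3 : ℝ) (h1 : 0 ≤ s1) (h2 : 0 ≤ s2) (h3 : 0 ≤ s3)
    (t1 : s1 ≤ s2 + s3) (t2 : s2 ≤ s1 + s3) (t3 : s3 ≤ s1 + s2) :
    ∃ u1 u2 u3 : ℂ, ‖u1‖ = 1 ∧ ‖u2‖ = 1 ∧ ‖u3‖ = 1 ∧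
      (s1 : ℂ) * u1 + (s2 : ℂ) * u2 + (s3 : ℂ) * u3 = 0 := by
  by_cases hz1 : s1 = 0
  · have he : s2 = s3 := le_antisymm (by linarith) (by linarith)
    refine ⟨1, 1, -1, by simp, by simp, by simp, ?_⟩
    rw [hz1, he]; push_cast; ring
  by_cases hz2 : s2 = 0
  · have he : s1 = s3 := le_antisymm (by linarith) (by linarith)
    refine ⟨1, 1, -1, by simp, by simp, by simp, ?_⟩
    rw [hz2, he]; push_cast; ring
  by_cases hz3 : s3 = 0
  · have he : s1 = s2 := le_antisymm (by linarith) (by linarith)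
    refine ⟨1, -1, 1, by simp, by simp, by simp, ?_⟩
    rw [hz3, he]; push_cast; ring
  · have hp1 : 0 < s1 := lt_of_le_of_ne h1 (Ne.symm hz1)
    have hp2 : 0 < s2 := lt_of_le_of_ne h2 (Ne.symm hz2)
    have hp3 : 0 < s3 := lt_of_le_of_ne h3 (Ne.symm hz3)
    have h2s : (0:ℝ) < 2 * s1 * s2 := by positivity
    set c : ℝ := (s3 ^ 2 - s1 ^ 2 - s2 ^ 2) / (2 * s1 * s2) with hc
    have hcc : c * (2 * s1 * s2) = s3 ^ 2 - s1 ^ 2 - s2 ^ 2 :=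
      div_mul_cancel₀ _ (ne_of_gt h2s)
    have hc1 : -1 ≤ c := by
      rw [hc, le_div_iff₀ h2s]; nlinarith
    have hc2 : c ≤ 1 := by
      rw [hc, div_le_iff₀ h2s]; nlinarith
    have hcsq : (0:ℝ) ≤ 1 - c ^ 2 := by nlinarith
    have hsq : Real.sqrt (1 - c ^ 2) ^ 2 = 1 - c ^ 2 := Real.sq_sqrt hcsq
    set u2 : ℂ := (c : ℂ) + (Real.sqrt (1 - c ^ 2) : ℂ) * Complex.I with hu2
    have hns2 : Complex.normSq u2 = 1 := by
      rw [hu2, Complex.normSq_add_mul_I, hsq]; ring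
    have hn2 : ‖u2‖ = 1 := by
      have hq := Complex.sq_norm u2
      rw [hns2] at hq
      have hnn := norm_nonneg u2
      nlinarith
    set v : ℂ := ((s1 + s2 * c : ℝ) : ℂ) + ((s2 * Real.sqrt (1 - c ^ 2) : ℝ) : ℂ) * Complex.I
      with hv
    have hveq : (s1 : ℂ) + (s2 : ℂ) * u2 = v := by
      rw [hv, hu2]; push_cast; ring
    have hnsv : Complex.normSq v = s3 ^ 2 := by
      rw [hv, Complex.normSq_add_mul_I, mul_pow, hsq]
      linear_combination hcc
    have hnv : ‖v‖ = s3 := by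
      have hq := Complex.sq_norm v
      rw [hnsv] at hq
      have hnn := norm_nonneg v
      nlinarith
    have hs3c : (s3 : ℂ) ≠ 0 := by exact_mod_cast ne_of_gt hp3
    refine ⟨1, u2, -v / (s3 : ℂ), by simp, hn2, ?_, ?_⟩
    · rw [norm_div, norm_neg, hnv, Complex.norm_real, Real.norm_eq_abs,
        abs_of_pos hp3, div_self (ne_of_gt hp3)]
    · rw [mul_one, ← hveq]
      field_simp
      ring

theorem stmt5 {n : ℕ} (hn : 2 ≤ n) (a : Fin n → ℂ)
    (h : ∀ k, ‖a k‖ ≤ (1 / 2) * ∑ j, ‖a j‖) :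
    ∃ θ : Fin n → ℝ, (∀ k, θ k ∈ Set.Ico 0 (2 * Real.pi)) ∧
      ∑ k, Complex.exp ((θ k : ℂ) * Complex.I) * a k = 0 := by
  classical
  set r : Fin n → ℝ := fun k => ‖a k‖ with hr
  set S : ℝ := ∑ j, ‖a j‖ with hS
  have hrnn : ∀ k, 0 ≤ r k := fun k => norm_nonneg _
  have hSnn : 0 ≤ S := Finset.sum_nonneg fun i _ => norm_nonneg _
  have hne : (Finset.univ : Finset (Fin n)).Nonempty := ⟨⟨0, by omega⟩, Finset.mem_univ _⟩
  obtain ⟨m, -, hm⟩ := Finset.exists_max_image Finset.univ r hne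
  set P : Fin n → ℝ := fun k => ∑ i ∈ Finset.univ.filter (fun i => i ≤ k ∧ i ≠ m), r i with hP
  set B : Finset (Fin n) := (Finset.univ.erase m).filter (fun k => P k ≤ S / 2) with hB
  set C : Finset (Fin n) := (Finset.univ.erase m).filter (fun k => ¬ P k ≤ S / 2) with hC
  set s1 : ℝ := r m with hs1
  set s2 : ℝ := ∑ k ∈ B, r k with hs2
  set s3 : ℝ := ∑ k ∈ C, r k with hs3
  have hsplit : s1 + (s2 + s3) = S := by
    rw [hs1, hs2, hs3, Finset.sum_filter_add_sum_filter_not]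
    exact Finset.add_sum_erase _ r (Finset.mem_univ m)
  have hle1 : s1 ≤ S / 2 := by
    have h1 : s1 = ‖a m‖ := rfl
    have := h m; linarith
  have hle2 : s2 ≤ S / 2 := by
    rcases B.eq_empty_or_nonempty with hBe | hBne
    · rw [hs2, hBe, Finset.sum_empty]; linarith
    · set k0 := B.max' hBne with hk0
      have hk0B : k0 ∈ B := B.max'_mem hBne
      have hk0P : P k0 ≤ S / 2 := (Finset.mem_filter.mp hk0B).2
      have hsub : B ⊆ Finset.univ.filter (fun i => i ≤ k0 ∧ i ≠ m) := by
        intro i hi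
        rw [Finset.mem_filter]
        exact ⟨Finset.mem_univ _, B.le_max' i hi,
          Finset.ne_of_mem_erase (Finset.mem_of_mem_filter i hi)⟩
      calc s2 ≤ P k0 := Finset.sum_le_sum_of_subset_of_nonneg hsub fun i _ _ => hrnn i
        _ ≤ S / 2 := hk0P
  have hle3 : s3 ≤ S / 2 := by
    rcases C.eq_empty_or_nonempty with hCe | hCne
    · rw [hs3, hCe, Finset.sum_empty]; linarith
    · set k1 := C.min' hCne with hk1
      have hk1C : k1 ∈ C := C.min'_mem hCne
      have hk1P : ¬ P k1 ≤ S / 2 := (Finset.mem_filter.mp hk1C).2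
      have hk1m : k1 ≠ m := Finset.ne_of_mem_erase (Finset.mem_of_mem_filter k1 hk1C)
      have hk1B : k1 ∉ B := fun hmem => hk1P (Finset.mem_filter.mp hmem).2
      have hsub : Finset.univ.filter (fun i => i ≤ k1 ∧ i ≠ m) ⊆ insert k1 B := by
        intro i hi
        rw [Finset.mem_filter] at hi
        obtain ⟨-, hile, him⟩ := hi
        rcases eq_or_lt_of_le hile with heq | hlt
        · rw [heq]; exact Finset.mem_insert_self _ _
        · refine Finset.mem_insert_of_mem ?_
          have hiC : i ∉ C := fun hiC => absurd (C.min'_le i hiC) (not_le.mpr hlt)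
          have hiP : P i ≤ S / 2 := by
            by_contra hP'
            exact hiC (Finset.mem_filter.mpr ⟨Finset.mem_erase.mpr ⟨him, Finset.mem_univ _⟩, hP'⟩)
          exact Finset.mem_filter.mpr ⟨Finset.mem_erase.mpr ⟨him, Finset.mem_univ _⟩, hiP⟩
      have hPk1 : P k1 ≤ r k1 + s2 := by
        calc P k1 ≤ ∑ i ∈ insert k1 B, r i :=
              Finset.sum_le_sum_of_subset_of_nonneg hsub fun i _ _ => hrnn i
          _ = r k1 + s2 := Finset.sum_insert hk1B
      have hrk1 : r k1 ≤ s1 := hm k1 (Finset.mem_univ _)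
      have : S / 2 < s1 + s2 := by
        have := not_le.mp hk1P
        linarith
      linarith
  obtain ⟨u1, u2, u3, hu1, hu2, hu3, husum⟩ :=
    triangle_units s1 s2 s3 (hrnn m) (Finset.sum_nonneg fun i _ => hrnn i)
      (Finset.sum_nonneg fun i _ => hrnn i) (by linarith) (by linarith) (by linarith)
  set U : Fin n → ℂ := fun k => if k = m then u1 else if P k ≤ S / 2 then u2 else u3 with hU
  have hUnorm : ∀ k, ‖U k‖ = 1 := by
    intro k
    rw [hU]
    by_cases hkm : k = m
    · simp [hkm, hu1]
    · by_cases hkP : P k ≤ S / 2 <;> simp [hkm, hkP, hu2, hu3]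
  choose θ hθmem hθeq using fun k => rotate_to (U k) (hUnorm k) (a k)
  refine ⟨θ, hθmem, ?_⟩
  have hstep : ∀ k, Complex.exp ((θ k : ℂ) * Complex.I) * a k = U k * (r k : ℂ) := fun k => hθeq k
  rw [Finset.sum_congr rfl fun k _ => hstep k]
  have hB2 : ∑ k ∈ B, U k * (r k : ℂ) = (s2 : ℂ) * u2 := by
    rw [hs2]
    push_cast
    rw [Finset.sum_mul]
    refine Finset.sum_congr rfl fun k hk => ?_
    have hkm : k ≠ m := Finset.ne_of_mem_erase (Finset.mem_of_mem_filter k hk)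
    have hkP : P k ≤ S / 2 := (Finset.mem_filter.mp hk).2
    rw [hU]; simp [hkm, hkP]; ring
  have hC2 : ∑ k ∈ C, U k * (r k : ℂ) = (s3 : ℂ) * u3 := by
    rw [hs3]
    push_cast
    rw [Finset.sum_mul]
    refine Finset.sum_congr rfl fun k hk => ?_
    have hkm : k ≠ m := Finset.ne_of_mem_erase (Finset.mem_of_mem_filter k hk)
    have hkP : ¬ P k ≤ S / 2 := (Finset.mem_filter.mp hk).2
    rw [hU]; simp [hkm, hkP]; ring
  have hM : U m * (r m : ℂ) = (s1 : ℂ) * u1 := by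
    rw [hU, hs1]; simp; ring
  calc ∑ k, U k * (r k : ℂ)
      = U m * (r m : ℂ) + ∑ k ∈ Finset.univ.erase m, U k * (r k : ℂ) :=
        (Finset.add_sum_erase _ _ (Finset.mem_univ m)).symm
    _ = U m * (r m : ℂ) + ((∑ k ∈ B, U k * (r k : ℂ)) + ∑ k ∈ C, U k * (r k : ℂ)) := by
        rw [Finset.sum_filter_add_sum_filter_not]
    _ = (s1 : ℂ) * u1 + ((s2 : ℂ) * u2 + (s3 : ℂ) * u3) := by rw [hM, hB2, hC2]
    _ = 0 := by rw [← husum]; ring
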